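/- Let f : ℝ^p → ℝ be a twice continuously differentiable convex function, θ₀ ∈ ℝ^p, and suppose there exist constants ν, c > 0 such that the Hessian ∇²f(θ) ⪰ ν·I for all θ with ‖θ - θ₀‖ ≤ c. Then for every θ ∈ ℝ^p, f(θ) ≥ f(θ₀) + ∇f(θ₀)ᵀ(θ - θ₀) + (ν/2)·min{‖θ - θ₀‖², c‖θ - θ₀‖}. -/

import Mathlib

open scoped RealInnerProductSpace

/-- 1-D second-order Taylor lower bound. -/
lemma taylor_lb (h : ℝ → ℝ) (a m : ℝ) (ha : 0 ≤ a)
    (h1 : Differentiable ℝ h) (h2 : Differentiable ℝ (deriv h))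
    (hm : ∀ t ∈ Set.Icc (0:ℝ) a, m ≤ deriv (deriv h) t) :
    h 0 + a * deriv h 0 + m / 2 * a ^ 2 ≤ h a := by
  have step1 : ∀ t ∈ Set.Icc (0:ℝ) a, deriv h 0 + m * t ≤ deriv h t := by
    intro t ht
    have hud : ∀ s : ℝ, HasDerivAt (fun s => deriv h s - m * s)
        (deriv (deriv h) s - m) s := by
      intro s
      have := ((h2 s).hasDerivAt).sub ((hasDerivAt_id s).const_mul m)
      simp only [id_eq, mul_one] at this
      exact this
    have humono : MonotoneOn (fun s => deriv h s - m * s) (Set.Icc 0 a) := by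
      apply monotoneOn_of_deriv_nonneg (convex_Icc 0 a)
      · exact (Continuous.sub (h2.continuous) (by continuity)).continuousOn
      · intro x hx
        exact ((hud x).differentiableAt).differentiableWithinAt
      · intro x hx
        rw [(hud x).deriv]
        have hx' : x ∈ Set.Icc (0:ℝ) a := interior_subset hx
        linarith [hm x hx']
    have := humono (Set.left_mem_Icc.2 ha) ht ht.1
    simp only at this
    linarith
  have hwd : ∀ s : ℝ, HasDerivAt (fun s => h s - s * deriv h 0 - m / 2 * s ^ 2)
      (deriv h s - deriv h 0 - m * s) s := by
    intro s
    have hp : HasDerivAt (fun s : ℝ => s ^ 2) (2 * s) s := by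
      simpa using hasDerivAt_pow 2 s
    have h3 : HasDerivAt (fun s : ℝ => m / 2 * s ^ 2) (m / 2 * (2 * s)) s :=
      hp.const_mul (m / 2)
    have := (((h1 s).hasDerivAt).sub ((hasDerivAt_id s).mul_const (deriv h 0))).sub h3
    exact this.congr_deriv (by ring)
  have hwmono : MonotoneOn (fun s => h s - s * deriv h 0 - m / 2 * s ^ 2)
      (Set.Icc 0 a) := by
    apply monotoneOn_of_deriv_nonneg (convex_Icc 0 a)
    · exact (Continuous.sub (Continuous.sub h1.continuous (by continuity))
        (by continuity)).continuousOn
    · intro x hx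
      exact ((hwd x).differentiableAt).differentiableWithinAt
    · intro x hx
      rw [(hwd x).deriv]
      have hx' : x ∈ Set.Icc (0:ℝ) a := interior_subset hx
      linarith [step1 x hx']
  have := hwmono (Set.left_mem_Icc.2 ha) (Set.right_mem_Icc.2 ha) ha
  simp only at this
  linarith

/-- Lower bound for a convex `C²` function whose Hessian is bounded below by `ν·I`
on a ball of radius `c` around `θ₀`. -/
theorem stmt0 {p : ℕ} (f : EuclideanSpace ℝ (Fin p) → ℝ)
    (hf : ContDiff ℝ 2 f) (hconv : ConvexOn ℝ Set.univ f)
    (θ₀ : EuclideanSpace ℝ (Fin p)) (ν c : ℝ) (hν : 0 < ν) (hc : 0 < c)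
    (hHess : ∀ θ : EuclideanSpace ℝ (Fin p), ‖θ - θ₀‖ ≤ c →
      ∀ v : EuclideanSpace ℝ (Fin p), ν * ‖v‖ ^ 2 ≤ iteratedFDeriv ℝ 2 f θ ![v, v]) :
    ∀ θ : EuclideanSpace ℝ (Fin p),
      f θ₀ + ⟪gradient f θ₀, θ - θ₀⟫ +
        ν / 2 * min (‖θ - θ₀‖ ^ 2) (c * ‖θ - θ₀‖) ≤ f θ := by
  intro θ
  set v := θ - θ₀ with hv
  set g : ℝ → ℝ := fun t => f (θ₀ + t • v) with hg
  have hfd : Differentiable ℝ f := hf.differentiable (by norm_num)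
  have hF1 : ContDiff ℝ 1 (fderiv ℝ f) := hf.fderiv_right (by norm_num)
  have hF1d : Differentiable ℝ (fderiv ℝ f) := hF1.differentiable one_ne_zero
  have hline : ∀ t : ℝ, HasDerivAt (fun t : ℝ => θ₀ + t • v) v t := by
    intro t
    simpa using ((hasDerivAt_id t).smul_const v).const_add θ₀
  have hg' : ∀ t : ℝ, HasDerivAt g (fderiv ℝ f (θ₀ + t • v) v) t := by
    intro t
    exact (hfd _).hasFDerivAt.comp_hasDerivAt t (hline t)
  have hgderiv : deriv g = fun t => fderiv ℝ f (θ₀ + t • v) v :=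
    funext fun t => (hg' t).deriv
  have hg'' : ∀ t : ℝ, HasDerivAt (fun t => fderiv ℝ f (θ₀ + t • v) v)
      (fderiv ℝ (fderiv ℝ f) (θ₀ + t • v) v v) t := by
    intro t
    have h1 : HasDerivAt (fun t : ℝ => fderiv ℝ f (θ₀ + t • v))
        (fderiv ℝ (fderiv ℝ f) (θ₀ + t • v) v) t :=
      (hF1d _).hasFDerivAt.comp_hasDerivAt t (hline t)
    simpa using h1.clm_apply (hasDerivAt_const t v)
  have hiter : ∀ x, fderiv ℝ (fderiv ℝ f) x v v = iteratedFDeriv ℝ 2 f x ![v, v] := by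
    intro x
    rw [iteratedFDeriv_two_apply]
    simp
  have hg1 : Differentiable ℝ g := fun t => (hg' t).differentiableAt
  have hg2 : Differentiable ℝ (deriv g) := by
    rw [hgderiv]; exact fun t => (hg'' t).differentiableAt
  have hgd2 : ∀ t : ℝ, deriv (deriv g) t = iteratedFDeriv ℝ 2 f (θ₀ + t • v) ![v, v] := by
    intro t
    rw [hgderiv, (hg'' t).deriv, hiter]
  have hg0 : g 0 = f θ₀ := by simp [hg]
  have hg1' : g 1 = f θ := by simp [hg, hv]
  have hgrad : ⟪gradient f θ₀, v⟫ = fderiv ℝ f θ₀ v := by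
    rw [gradient, ← InnerProductSpace.toDual_apply_apply, LinearIsometryEquiv.apply_symm_apply]
  have hD0 : deriv g 0 = ⟪gradient f θ₀, v⟫ := by
    rw [hgderiv, hgrad]; simp
  have hnorm : ∀ t : ℝ, 0 ≤ t → ‖(θ₀ + t • v) - θ₀‖ = t * ‖v‖ := by
    intro t ht
    simp [norm_smul, abs_of_nonneg ht]
  -- key Taylor bound on [0,a] whenever a‖v‖ ≤ c
  have key : ∀ a : ℝ, 0 ≤ a → a * ‖v‖ ≤ c →
      g 0 + a * deriv g 0 + (ν * ‖v‖ ^ 2) / 2 * a ^ 2 ≤ g a := by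
    intro a ha hac
    apply taylor_lb g a (ν * ‖v‖ ^ 2) ha hg1 hg2
    intro t ht
    rw [hgd2 t]
    apply hHess
    rw [hnorm t ht.1]
    calc t * ‖v‖ ≤ a * ‖v‖ := by nlinarith [norm_nonneg v, ht.2]
    _ ≤ c := hac
  rcases le_or_gt ‖v‖ c with hle | hgt
  · -- case ‖v‖ ≤ c
    have hmin : min (‖v‖ ^ 2) (c * ‖v‖) = ‖v‖ ^ 2 := by
      apply min_eq_left; nlinarith [norm_nonneg v]
    have := key 1 zero_le_one (by linarith [norm_nonneg v, hle, one_mul ‖v‖])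
    rw [hg0, hg1', hD0] at this
    rw [hmin]
    nlinarith
  · -- case c < ‖v‖
    have hvpos : 0 < ‖v‖ := lt_trans hc hgt
    set s := c / ‖v‖ with hs
    have hspos : 0 < s := div_pos hc hvpos
    have hslt : s < 1 := (div_lt_one hvpos).2 hgt
    have hsv : s * ‖v‖ = c := div_mul_cancel₀ c (ne_of_gt hvpos)
    have hkey := key s (le_of_lt hspos) (le_of_eq hsv)
    -- convexity: g s ≤ (1-s) f θ₀ + s f θ
    have hconv' : g s ≤ (1 - s) * f θ₀ + s * f θ := by
      have := hconv.2 (Set.mem_univ θ₀) (Set.mem_univ θ)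
        (by linarith : (0:ℝ) ≤ 1 - s) (le_of_lt hspos) (by ring)
      have heq : (1 - s) • θ₀ + s • θ = θ₀ + s • v := by
        rw [hv]; module
      rw [heq] at this
      exact this
    rw [hg0, hD0] at hkey
    have hmin : min (‖v‖ ^ 2) (c * ‖v‖) = c * ‖v‖ := by
      apply min_eq_right; nlinarith
    rw [hmin]
    have hs2 : (ν * ‖v‖ ^ 2) / 2 * s ^ 2 = ν * c ^ 2 / 2 := by
      field_simp [hs]; rw [← hsv]; ring
    rw [hs2] at hkey
    -- combine: f θ₀ + s * D + ν c²/2 ≤ (1-s) f θ₀ + s f θ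
    have hcomb : f θ₀ + s * ⟪gradient f θ₀, v⟫ + ν * c ^ 2 / 2 ≤
        (1 - s) * f θ₀ + s * f θ := le_trans hkey hconv'
    -- divide by s; note ν c²/(2s) = ν c ‖v‖ / 2
    have hdiv : ν * c ^ 2 / 2 = s * (ν / 2 * (c * ‖v‖)) := by
      rw [hs]; field_simp
    rw [hdiv] at hcomb
    nlinarith [hcomb]
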